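/- arXiv:1303.3397 — 2 statements merged into one kernel-verified Lean document; each statement's English description precedes it below -/
import Mathlib

section
/- For a triangulation T of the annulus C_{p,q} (p,q ≥ 1), the number of Prüfer arcs in D_z^{+∞} · T equals the number of bridging arcs in T; equivalently, the set of endpoints of bridging arcs of T, counted over both boundaries, has the same cardinality as the set of bridging arcs of T. -/
/-- Asymptotic arcs of the annulus `C_{p,q}`: peripheral arcs on each boundary
(marked points `ZMod p` on the lower boundary `∂`, `ZMod q` on the upper
boundary `∂'`), bridging arcs (two endpoints and a winding number), and the
strictly asymptotic Prüfer/adic arcs based at a marked point of one boundary. -/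
inductive AnnArc (p q : ℕ) : Type
  | lowerPeri (i j : ZMod p) : AnnArc p q
  | upperPeri (i j : ZMod q) : AnnArc p q
  | bridging (i : ZMod p) (j : ZMod q) (w : ℤ) : AnnArc p q
  | lowerPrufer (m : ZMod p) : AnnArc p q
  | lowerAdic (m : ZMod p) : AnnArc p q
  | upperPrufer (m : ZMod q) : AnnArc p q
  | upperAdic (m : ZMod q) : AnnArc p q
  deriving DecidableEq

namespace AnnArc

variable {p q : ℕ}

/-- `m` lies strictly (cyclically) between `i` and `j`. -/
def Between {r : ℕ} (i j m : ZMod r) : Prop :=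
  0 < (m - i).val ∧ (m - i).val < (j - i).val

/-- The cyclic open interval of marked points covered by a peripheral arc. -/
def Cov {r : ℕ} (i j : ZMod r) : Set (ZMod r) := {m | Between i j m}

/-- Two peripheral arcs on the same boundary are compatible iff their covered
intervals are nested or disjoint. -/
def periCompat {r : ℕ} (i j k l : ZMod r) : Prop :=
  Cov i j ⊆ Cov k l ∨ Cov k l ⊆ Cov i j ∨ Disjoint (Cov i j) (Cov k l)

/-- Non-crossing of two bridging arcs, checked on all lifts in the universal cover. -/
def bridgeCompat (p q : ℕ) (i : ZMod p) (j : ZMod q) (w : ℤ)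
    (i' : ZMod p) (j' : ZMod q) (w' : ℤ) : Prop :=
  ∀ k : ℤ, 0 ≤ ((i.val : ℤ) - ((i'.val : ℤ) + k * p)) *
      (((j.val : ℤ) + w * q) - ((j'.val : ℤ) + (w' + k) * q))

/-- Validity of an asymptotic arc of the annulus. -/
def IsArc : AnnArc p q → Prop
  | lowerPeri i j => j ≠ i ∧ j ≠ i + 1
  | upperPeri i j => j ≠ i ∧ j ≠ i + 1
  | _ => True

/-- Strictly asymptotic arcs: Prüfer and adic arcs. -/
def IsStrict : AnnArc p q → Prop
  | lowerPrufer _ => True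
  | lowerAdic _ => True
  | upperPrufer _ => True
  | upperAdic _ => True
  | _ => False

/-- Bridging arcs. -/
def IsBridging : AnnArc p q → Prop
  | bridging _ _ _ => True
  | _ => False

/-- Peripheral arcs. -/
def IsPeri : AnnArc p q → Prop
  | lowerPeri _ _ => True
  | upperPeri _ _ => True
  | _ => False

/-- Arcs based at the lower boundary `∂`. -/
def BasedLower : AnnArc p q → Prop
  | lowerPeri _ _ => True
  | lowerPrufer _ => True
  | lowerAdic _ => True
  | _ => False

/-- Arcs based at the upper boundary `∂'`. -/
def BasedUpper : AnnArc p q → Prop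
  | upperPeri _ _ => True
  | upperPrufer _ => True
  | upperAdic _ => True
  | _ => False

/-- Compatibility of asymptotic arcs of the annulus: same-boundary peripheral
arcs as in the tube model; bridging arcs compatible with a peripheral arc iff
the relevant endpoint lies outside the covered interval; bridging arcs
pairwise non-crossing in the universal cover; Prüfer/adic arcs compatible with
a peripheral arc on their boundary iff the basepoint is outside the covered
interval; bridging arcs incompatible with every strictly asymptotic arc;
Prüfer–Prüfer and adic–adic pairs always compatible; on one boundary
`π m` is compatible with `α m'` iff `m = m'`; arcs based at different
boundaries are always compatible. -/
def Compatible : AnnArc p q → AnnArc p q → Prop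
  | lowerPeri i j, lowerPeri k l => periCompat i j k l
  | upperPeri i j, upperPeri k l => periCompat i j k l
  | lowerPeri a b, bridging i _ _ => ¬ Between a b i
  | bridging i _ _, lowerPeri a b => ¬ Between a b i
  | upperPeri a b, bridging _ j _ => ¬ Between a b j
  | bridging _ j _, upperPeri a b => ¬ Between a b j
  | bridging i j w, bridging i' j' w' => bridgeCompat p q i j w i' j' w'
  | lowerPeri a b, lowerPrufer m => ¬ Between a b m
  | lowerPrufer m, lowerPeri a b => ¬ Between a b m
  | lowerPeri a b, lowerAdic m => ¬ Between a b m
  | lowerAdic m, lowerPeri a b => ¬ Between a b m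
  | upperPeri a b, upperPrufer m => ¬ Between a b m
  | upperPrufer m, upperPeri a b => ¬ Between a b m
  | upperPeri a b, upperAdic m => ¬ Between a b m
  | upperAdic m, upperPeri a b => ¬ Between a b m
  | bridging _ _ _, lowerPrufer _ => False
  | lowerPrufer _, bridging _ _ _ => False
  | bridging _ _ _, lowerAdic _ => False
  | lowerAdic _, bridging _ _ _ => False
  | bridging _ _ _, upperPrufer _ => False
  | upperPrufer _, bridging _ _ _ => False
  | bridging _ _ _, upperAdic _ => False
  | upperAdic _, bridging _ _ _ => False
  | lowerPrufer m, lowerAdic m' => m = m'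
  | lowerAdic m, lowerPrufer m' => m = m'
  | upperPrufer m, upperAdic m' => m = m'
  | upperAdic m, upperPrufer m' => m = m'
  | _, _ => True

end AnnArc

/-- An asymptotic triangulation of the annulus: a maximal collection of pairwise
distinct compatible asymptotic arcs. -/
structure IsAsympTriangulation {p q : ℕ} (T : Set (AnnArc p q)) : Prop where
  isArc : ∀ a ∈ T, a.IsArc
  compat : ∀ a ∈ T, ∀ b ∈ T, a ≠ b → a.Compatible b
  maximal : ∀ a : AnnArc p q, a.IsArc → (∀ b ∈ T, a ≠ b → a.Compatible b) → a ∈ T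

/-- An ordinary triangulation of the annulus: a maximal collection of pairwise
distinct compatible ordinary (peripheral or bridging) arcs. -/
structure IsTriangulation {p q : ℕ} (T : Set (AnnArc p q)) : Prop where
  isArc : ∀ a ∈ T, a.IsArc
  ordinary : ∀ a ∈ T, ¬ a.IsStrict
  compat : ∀ a ∈ T, ∀ b ∈ T, a ≠ b → a.Compatible b
  maximal : ∀ a : AnnArc p q, a.IsArc → ¬ a.IsStrict →
    (∀ b ∈ T, a ≠ b → a.Compatible b) → a ∈ T

/-- A maximal compatible collection of asymptotic arcs based at one boundary
(a partial asymptotic triangulation based at that boundary). -/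
def MaximalBased {p q : ℕ} (based : AnnArc p q → Prop) (S : Set (AnnArc p q)) : Prop :=
  (∀ a ∈ S, a.IsArc ∧ based a) ∧
  (∀ a ∈ S, ∀ b ∈ S, a ≠ b → a.Compatible b) ∧
  (∀ a : AnnArc p q, a.IsArc → based a → (∀ b ∈ S, a ≠ b → a.Compatible b) → a ∈ S)

/-- Two (asymptotic) triangulations are adjacent in the exchange graph iff they
differ in exactly one arc. -/
def ExchangeAdj {p q : ℕ} (T T' : Set (AnnArc p q)) : Prop :=
  ∃ θ ∈ T, ∃ θ' ∈ T', θ ≠ θ' ∧ T \ {θ} = T' \ {θ'}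


namespace AnnCount

theorem abstract_count {p q : ℤ} (hp : 0 < p) (hq : 0 < q) (S : Finset (ℤ × ℤ))
    (h1 : ∀ z ∈ S, 0 ≤ z.1 ∧ z.1 < p)
    (h2 : ∀ z ∈ S, ∀ w ∈ S, z.1 < w.1 → z.2 ≤ w.2)
    (h3 : ∀ z ∈ S, ∀ w ∈ S, z.2 ≤ w.2 + q)
    (h4 : ∀ z ∈ S, ∀ z' ∈ S, z.1 < z'.1 → z.2 < z'.2 →
      (∀ w ∈ S, ¬(z.1 < w.1 ∧ w.1 ≤ z'.1 ∧ z.2 ≤ w.2 ∧ w.2 < z'.2)) → (z.1, z'.2) ∈ S)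
    (h5 : ∀ z ∈ S, ∀ z' ∈ S, z.2 < z'.2 + q →
      (∀ w ∈ S, ¬(z.1 < w.1 ∧ z.2 ≤ w.2 ∧ w.2 < z'.2 + q)) →
      (∀ w ∈ S, ¬(w.1 ≤ z'.1 ∧ z.2 ≤ w.2 + q ∧ w.2 < z'.2)) → (z.1, z'.2 + q) ∈ S) :
    (S.image Prod.fst).card + (S.image fun z => z.2 % q).card = S.card := by
  rcases S.eq_empty_or_nonempty with rfl | hSne
  · simp
  -- lex set
  set L : Finset (ℤ ×ₗ ℤ) := S.image toLex with hL
  have hLne : L.Nonempty := hSne.image _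
  have hmemL : ∀ z : ℤ ×ₗ ℤ, z ∈ L ↔ ofLex z ∈ S := by
    intro z
    constructor
    · intro hz
      rcases Finset.mem_image.1 hz with ⟨s, hs, rfl⟩
      simpa using hs
    · intro hz
      exact Finset.mem_image.2 ⟨ofLex z, hz, rfl⟩
  have hlt : ∀ z w : ℤ ×ₗ ℤ, z < w ↔ ((ofLex z).1 < (ofLex w).1 ∨
      ((ofLex z).1 = (ofLex w).1 ∧ (ofLex z).2 < (ofLex w).2)) := by
    intro z w
    exact Prod.Lex.lt_iff
  have hle : ∀ z w : ℤ ×ₗ ℤ, z ≤ w ↔ ((ofLex z).1 < (ofLex w).1 ∨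
      ((ofLex z).1 = (ofLex w).1 ∧ (ofLex z).2 ≤ (ofLex w).2)) := by
    intro z w
    exact Prod.Lex.le_iff
  set m : ℤ ×ₗ ℤ := L.min' hLne with hm
  set M : ℤ ×ₗ ℤ := L.max' hLne with hM
  have hmL : m ∈ L := L.min'_mem hLne
  have hML : M ∈ L := L.max'_mem hLne
  have hx : ∀ z ∈ L, 0 ≤ (ofLex z).1 ∧ (ofLex z).1 < p := by
    intro z hz; exact h1 _ ((hmemL z).1 hz)
  have hmono2 : ∀ z ∈ L, ∀ w ∈ L, z ≤ w → (ofLex z).2 ≤ (ofLex w).2 := by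
    intro z hz w hw hzw
    rcases (hle z w).1 hzw with h | ⟨_, h⟩
    · exact h2 _ ((hmemL z).1 hz) _ ((hmemL w).1 hw) h
    · exact h
  -- the successor function
  set nxt : (ℤ ×ₗ ℤ) → (ℤ ×ₗ ℤ) := fun z =>
    if h : (L.filter (fun w => z < w)).Nonempty then (L.filter (fun w => z < w)).min' h
    else toLex ((ofLex m).1 + p, (ofLex m).2 + q) with hnxtdef
  have hnxt : ∀ z ∈ L, z ≠ M → nxt z ∈ L ∧ z < nxt z ∧ ∀ w ∈ L, z < w → nxt z ≤ w := by
    intro z hz hne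
    have hMf : M ∈ L.filter (fun w => z < w) :=
      Finset.mem_filter.2 ⟨hML, lt_of_le_of_ne (L.le_max' z hz) hne⟩
    have hF : (L.filter (fun w => z < w)).Nonempty := ⟨M, hMf⟩
    have e : nxt z = (L.filter (fun w => z < w)).min' hF := by
      simp only [hnxtdef]; rw [dif_pos hF]
    have h1' := (L.filter (fun w => z < w)).min'_mem hF
    rw [Finset.mem_filter] at h1'
    refine ⟨by rw [e]; exact h1'.1, by rw [e]; exact h1'.2, ?_⟩
    intro w hw hzw
    rw [e]
    exact Finset.min'_le _ _ (Finset.mem_filter.2 ⟨hw, hzw⟩)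
  have hnxtM : nxt M = toLex ((ofLex m).1 + p, (ofLex m).2 + q) := by
    have hF : ¬ (L.filter (fun w => M < w)).Nonempty := by
      rintro ⟨w, hw⟩
      rw [Finset.mem_filter] at hw
      exact absurd (L.le_max' w hw.1) (not_le_of_gt hw.2)
    simp only [hnxtdef]; rw [dif_neg hF]
  -- wrap step is an x-step
  have hMy : (ofLex M).2 = (ofLex m).2 + q := by
    have hq1 : (ofLex M).2 ≤ (ofLex m).2 + q := h3 _ ((hmemL M).1 hML) _ ((hmemL m).1 hmL)
    by_contra hne
    have hlt2 : (ofLex M).2 < (ofLex m).2 + q := lt_of_le_of_ne hq1 hne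
    have w1 : ∀ w ∈ S, ¬((ofLex M).1 < w.1 ∧ (ofLex M).2 ≤ w.2 ∧ w.2 < (ofLex m).2 + q) := by
      rintro w hw ⟨hw1, _, _⟩
      have h' : toLex w ≤ M := L.le_max' _ ((hmemL (toLex w)).2 (by simpa using hw))
      rcases (hle (toLex w) M).1 h' with h | ⟨h, _⟩ <;> rw [ofLex_toLex] at h <;> omega
    have w2 : ∀ w ∈ S, ¬(w.1 ≤ (ofLex m).1 ∧ (ofLex M).2 ≤ w.2 + q ∧ w.2 < (ofLex m).2) := by
      rintro w hw ⟨hw1, _, hw3⟩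
      have h' : m ≤ toLex w := L.min'_le _ ((hmemL (toLex w)).2 (by simpa using hw))
      rcases (hle m (toLex w)).1 h' with h | ⟨h, h2'⟩
      · rw [ofLex_toLex] at h; omega
      · rw [ofLex_toLex] at h h2'; omega
    have hu : ((ofLex M).1, (ofLex m).2 + q) ∈ S :=
      h5 _ ((hmemL M).1 hML) _ ((hmemL m).1 hmL) hlt2 w1 w2
    have h' : toLex ((ofLex M).1, (ofLex m).2 + q) ≤ M := L.le_max' _ ((hmemL _).2 (by simpa using hu))
    rcases (hle _ M).1 h' with h | ⟨h, h2'⟩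
    · rw [ofLex_toLex] at h; omega
    · rw [ofLex_toLex] at h h2'; omega
  -- the step lemma
  have step : ∀ z ∈ L, ((ofLex (nxt z)).1 = (ofLex z).1 ∧ (ofLex z).2 < (ofLex (nxt z)).2) ∨
      ((ofLex z).1 < (ofLex (nxt z)).1 ∧ (ofLex (nxt z)).2 = (ofLex z).2) := by
    intro z hz
    by_cases hzM : z = M
    · subst hzM
      rw [hnxtM]
      right
      simp only [ofLex_toLex]
      constructor
      · have := hx M hML
        have := hx m hmL
        omega
      · omega
    · obtain ⟨hnL, hnlt, hmin⟩ := hnxt z hz hzM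
      have hy : (ofLex z).2 ≤ (ofLex (nxt z)).2 := hmono2 z hz _ hnL (le_of_lt hnlt)
      rcases (hlt z (nxt z)).1 hnlt with hxx | ⟨hxx, hyy⟩
      · -- x strictly increases; show y equal
        right
        refine ⟨hxx, ?_⟩
        by_contra hne
        have hyy : (ofLex z).2 < (ofLex (nxt z)).2 := lt_of_le_of_ne hy (fun e => hne e.symm)
        have hnowit : ∀ w ∈ S, ¬((ofLex z).1 < w.1 ∧ w.1 ≤ (ofLex (nxt z)).1 ∧
            (ofLex z).2 ≤ w.2 ∧ w.2 < (ofLex (nxt z)).2) := by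
          rintro w hw ⟨a1, a2, a3, a4⟩
          have hwL : toLex w ∈ L := (hmemL (toLex w)).2 (by simpa using hw)
          have hzw : z < toLex w := (hlt _ _).2 (by simp only [ofLex_toLex]; omega)
          have h' := hmin _ hwL hzw
          rcases (hle (nxt z) (toLex w)).1 h' with h | ⟨h, h2'⟩
          · rw [ofLex_toLex] at h; omega
          · rw [ofLex_toLex] at h h2'; omega
        have hu : ((ofLex z).1, (ofLex (nxt z)).2) ∈ S :=
          h4 _ ((hmemL z).1 hz) _ ((hmemL (nxt z)).1 hnL) hxx hyy hnowit
        have huL : toLex ((ofLex z).1, (ofLex (nxt z)).2) ∈ L := (hmemL _).2 (by simpa using hu)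
        have hzu : z < toLex ((ofLex z).1, (ofLex (nxt z)).2) :=
          (hlt _ _).2 (by rw [ofLex_toLex]; exact Or.inr ⟨rfl, hyy⟩)
        have h' := hmin _ huL hzu
        rcases (hle (nxt z) _).1 h' with h | ⟨h, h2'⟩
        · rw [ofLex_toLex] at h; omega
        · rw [ofLex_toLex] at h h2'; omega
      · left; exact ⟨hxx.symm, hyy⟩
  -- predecessor existence
  have pred : ∀ z ∈ L, z ≠ m → ∃ u ∈ L, u ≠ M ∧ nxt u = z := by
    intro z hz hzm
    have hmf : m ∈ L.filter (fun w => w < z) :=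
      Finset.mem_filter.2 ⟨hmL, lt_of_le_of_ne (L.min'_le z hz) (Ne.symm hzm)⟩
    have hF : (L.filter (fun w => w < z)).Nonempty := ⟨m, hmf⟩
    obtain ⟨u, huf, hmax⟩ : ∃ u ∈ L.filter (fun w => w < z),
        ∀ w ∈ L.filter (fun w => w < z), w ≤ u :=
      ⟨_, (L.filter (fun w => w < z)).max'_mem hF,
        fun w hw => Finset.le_max' _ w hw⟩
    rw [Finset.mem_filter] at huf
    have huM : u ≠ M := by
      intro h
      rw [h] at huf
      exact absurd (L.le_max' z hz) (not_le_of_gt huf.2)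
    obtain ⟨hnL, hnlt, hmin⟩ := hnxt u huf.1 huM
    refine ⟨u, huf.1, huM, ?_⟩
    have h1' : nxt u ≤ z := hmin z hz huf.2
    rcases lt_or_eq_of_le h1' with h | h
    · exact absurd (hmax _ (Finset.mem_filter.2 ⟨hnL, h⟩)) (not_le_of_gt hnlt)
    · exact h
  have hmono1 : ∀ z ∈ L, ∀ w ∈ L, z ≤ w → (ofLex z).1 ≤ (ofLex w).1 := by
    intro z hz w hw hzw
    rcases (hle z w).1 hzw with h | ⟨h, _⟩ <;> omega
  have hmodp : ∀ a : ℤ, 0 ≤ a → a < p → (a + p) % p = a := by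
    intro a ha1 ha2
    rw [show a + p = a + p * 1 by ring, Int.add_mul_emod_self_left, Int.emod_eq_of_lt ha1 ha2]
  have hmodq : ∀ a : ℤ, (a + q) % q = a % q := by
    intro a
    rw [show a + q = a + q * 1 by ring, Int.add_mul_emod_self_left]
  have hnxtMy : (ofLex (nxt M)).2 = (ofLex M).2 := by
    rw [hnxtM, ofLex_toLex, ← hMy]
  have hXstep : ∀ z ∈ L, (ofLex (nxt z)).2 = (ofLex z).2 → (ofLex z).1 < (ofLex (nxt z)).1 := by
    intro z hz he
    rcases step z hz with ⟨_, h⟩ | ⟨h, _⟩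
    · omega
    · exact h
  have hYstep : ∀ z ∈ L, ¬ (ofLex (nxt z)).2 = (ofLex z).2 →
      (ofLex (nxt z)).1 = (ofLex z).1 ∧ (ofLex z).2 < (ofLex (nxt z)).2 ∧ z ≠ M := by
    intro z hz he
    have hzM : z ≠ M := by
      intro h; rw [h] at he; exact he hnxtMy
    rcases step z hz with ⟨h1', h2'⟩ | ⟨_, h⟩
    · exact ⟨h1', h2', hzM⟩
    · exact absurd h he
  -- split L by step type
  have hsplit : (L.filter (fun z => (ofLex (nxt z)).2 = (ofLex z).2)).card +
      (L.filter (fun z => ¬ (ofLex (nxt z)).2 = (ofLex z).2)).card = L.card :=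
    Finset.card_filter_add_card_filter_not _
  have bij1 : (L.filter (fun z => (ofLex (nxt z)).2 = (ofLex z).2)).card
      = (S.image Prod.fst).card := by
    have key1 : ∀ z ∈ L.filter (fun z => (ofLex (nxt z)).2 = (ofLex z).2),
        ∀ w ∈ L.filter (fun z => (ofLex (nxt z)).2 = (ofLex z).2), z < w →
        (ofLex (nxt z)).1 % p ≠ (ofLex (nxt w)).1 % p := by
      intro z hz w hw hzw he
      rw [Finset.mem_filter] at hz hw
      have hzM : z ≠ M := by
        intro h
        rw [h] at hzw
        exact absurd (L.le_max' w hw.1) (not_le_of_gt hzw)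
      obtain ⟨hnL, hnlt, hmin⟩ := hnxt z hz.1 hzM
      have hvz : (ofLex (nxt z)).1 % p = (ofLex (nxt z)).1 :=
        Int.emod_eq_of_lt (hx _ hnL).1 (hx _ hnL).2
      by_cases hwM : w = M
      · subst hwM
        rw [hvz, hnxtM, ofLex_toLex] at he
        have hb := hx m hmL
        rw [hmodp _ hb.1 hb.2] at he
        have h1' : (ofLex m).1 ≤ (ofLex z).1 := hmono1 m hmL z hz.1 (L.min'_le z hz.1)
        have h2' : (ofLex z).1 < (ofLex (nxt z)).1 := hXstep z hz.1 hz.2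
        omega
      · obtain ⟨hnL', hnlt', _⟩ := hnxt w hw.1 hwM
        have hvw : (ofLex (nxt w)).1 % p = (ofLex (nxt w)).1 :=
          Int.emod_eq_of_lt (hx _ hnL').1 (hx _ hnL').2
        rw [hvz, hvw] at he
        have h1' : nxt z ≤ w := hmin w hw.1 hzw
        have h2' : (ofLex (nxt z)).1 ≤ (ofLex w).1 := hmono1 _ hnL _ hw.1 h1'
        have h3' : (ofLex w).1 < (ofLex (nxt w)).1 := hXstep w hw.1 hw.2
        omega
    apply Finset.card_bij (fun z _ => (ofLex (nxt z)).1 % p)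
    · intro z hz
      rw [Finset.mem_filter] at hz
      by_cases hzM : z = M
      · subst hzM
        rw [hnxtM, ofLex_toLex]
        have hb := hx m hmL
        rw [hmodp _ hb.1 hb.2]
        exact Finset.mem_image.2 ⟨ofLex m, (hmemL m).1 hmL, rfl⟩
      · obtain ⟨hnL, _, _⟩ := hnxt z hz.1 hzM
        rw [Int.emod_eq_of_lt (hx _ hnL).1 (hx _ hnL).2]
        exact Finset.mem_image.2 ⟨ofLex (nxt z), (hmemL _).1 hnL, rfl⟩
    · intro z hz w hw he
      by_contra hne
      rcases lt_trichotomy z w with h | h | h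
      · exact key1 z hz w hw h he
      · exact hne h
      · exact key1 w hw z hz h he.symm
    · intro b hb
      rcases Finset.mem_image.1 hb with ⟨s, hs, rfl⟩
      have hA : (L.filter (fun z => (ofLex z).1 = s.1)).Nonempty :=
        ⟨toLex s, Finset.mem_filter.2 ⟨(hmemL _).2 (by simpa using hs), by rw [ofLex_toLex]⟩⟩
      obtain ⟨z₀, hz₀A, hz₀min⟩ : ∃ z₀ ∈ L.filter (fun z => (ofLex z).1 = s.1),
          ∀ w ∈ L.filter (fun z => (ofLex z).1 = s.1), z₀ ≤ w :=
        ⟨_, Finset.min'_mem _ hA, fun w hw => Finset.min'_le _ w hw⟩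
      rw [Finset.mem_filter] at hz₀A
      by_cases hz₀m : z₀ = m
      · refine ⟨M, Finset.mem_filter.2 ⟨hML, hnxtMy⟩, ?_⟩
        rw [hnxtM, ofLex_toLex]
        have hb' := hx m hmL
        rw [hmodp _ hb'.1 hb'.2, ← hz₀m]
        exact hz₀A.2
      · obtain ⟨u, huL, huM, hnu⟩ := pred z₀ hz₀A.1 hz₀m
        obtain ⟨hnL, hnlt, _⟩ := hnxt u huL huM
        have hust : (ofLex (nxt u)).2 = (ofLex u).2 := by
          rcases step u huL with ⟨h1', _⟩ | ⟨_, h2'⟩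
          · exfalso
            have : u ∈ L.filter (fun z => (ofLex z).1 = s.1) :=
              Finset.mem_filter.2 ⟨huL, by rw [← hnu] at hz₀A; omega⟩
            have := hz₀min u this
            rw [← hnu] at this
            exact absurd this (not_le_of_gt hnlt)
          · exact h2'
        refine ⟨u, Finset.mem_filter.2 ⟨huL, hust⟩, ?_⟩
        rw [hnu]
        have hb' := hx z₀ hz₀A.1
        rw [hz₀A.2] at hb'
        rw [hz₀A.2, Int.emod_eq_of_lt hb'.1 hb'.2]
  have bij2 : (L.filter (fun z => ¬ (ofLex (nxt z)).2 = (ofLex z).2)).card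
      = (S.image fun z => z.2 % q).card := by
    have key2 : ∀ z ∈ L.filter (fun z => ¬ (ofLex (nxt z)).2 = (ofLex z).2),
        ∀ w ∈ L.filter (fun z => ¬ (ofLex (nxt z)).2 = (ofLex z).2), z < w →
        (ofLex (nxt z)).2 % q ≠ (ofLex (nxt w)).2 % q := by
      intro z hz w hw hzw he
      rw [Finset.mem_filter] at hz hw
      obtain ⟨_, hy1, hzM⟩ := hYstep z hz.1 hz.2
      obtain ⟨_, hy2, hwM⟩ := hYstep w hw.1 hw.2
      obtain ⟨hnL, hnlt, hmin⟩ := hnxt z hz.1 hzM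
      obtain ⟨hnL', hnlt', _⟩ := hnxt w hw.1 hwM
      have h1' : nxt z ≤ w := hmin w hw.1 hzw
      have h2' : (ofLex (nxt z)).2 ≤ (ofLex w).2 := hmono2 _ hnL _ hw.1 h1'
      have hab : (ofLex (nxt z)).2 < (ofLex (nxt w)).2 := by omega
      have hdvd : (q : ℤ) ∣ (ofLex (nxt w)).2 - (ofLex (nxt z)).2 := Int.ModEq.dvd he
      have hle' : q ≤ (ofLex (nxt w)).2 - (ofLex (nxt z)).2 :=
        Int.le_of_dvd (by omega) hdvd
      have h3' : (ofLex (nxt w)).2 ≤ (ofLex (nxt z)).2 + q :=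
        h3 _ ((hmemL _).1 hnL') _ ((hmemL _).1 hnL)
      have h4' : (ofLex (nxt w)).2 ≤ (ofLex z).2 + q :=
        h3 _ ((hmemL _).1 hnL') _ ((hmemL z).1 hz.1)
      omega
    apply Finset.card_bij (fun z _ => (ofLex (nxt z)).2 % q)
    · intro z hz
      rw [Finset.mem_filter] at hz
      obtain ⟨_, _, hzM⟩ := hYstep z hz.1 hz.2
      obtain ⟨hnL, _, _⟩ := hnxt z hz.1 hzM
      exact Finset.mem_image.2 ⟨ofLex (nxt z), (hmemL _).1 hnL, rfl⟩
    · intro z hz w hw he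
      by_contra hne
      rcases lt_trichotomy z w with h | h | h
      · exact key2 z hz w hw h he
      · exact hne h
      · exact key2 w hw z hz h he.symm
    · intro b hb
      rcases Finset.mem_image.1 hb with ⟨s, hs, rfl⟩
      have hA : (L.filter (fun z => (ofLex z).2 % q = s.2 % q)).Nonempty :=
        ⟨toLex s, Finset.mem_filter.2 ⟨(hmemL _).2 (by simpa using hs), by rw [ofLex_toLex]⟩⟩
      obtain ⟨z₀, hz₀A, hz₀min⟩ : ∃ z₀ ∈ L.filter (fun z => (ofLex z).2 % q = s.2 % q),
          ∀ w ∈ L.filter (fun z => (ofLex z).2 % q = s.2 % q), z₀ ≤ w :=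
        ⟨_, Finset.min'_mem _ hA, fun w hw => Finset.min'_le _ w hw⟩
      rw [Finset.mem_filter] at hz₀A
      by_cases hz₀m : z₀ = m
      · -- second phase: use minimal element with y = m.2 + q
        have hMA' : M ∈ L.filter (fun z => (ofLex z).2 = (ofLex m).2 + q) :=
          Finset.mem_filter.2 ⟨hML, hMy⟩
        obtain ⟨z₁, hz₁A, hz₁min⟩ : ∃ z₁ ∈ L.filter (fun z => (ofLex z).2 = (ofLex m).2 + q),
            ∀ w ∈ L.filter (fun z => (ofLex z).2 = (ofLex m).2 + q), z₁ ≤ w :=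
          ⟨_, Finset.min'_mem _ ⟨M, hMA'⟩, fun w hw => Finset.min'_le _ w hw⟩
        rw [Finset.mem_filter] at hz₁A
        have hz₁m : z₁ ≠ m := by
          intro h
          rw [h] at hz₁A
          omega
        obtain ⟨u, huL, huM, hnu⟩ := pred z₁ hz₁A.1 hz₁m
        obtain ⟨hnL, hnlt, _⟩ := hnxt u huL huM
        have hust : ¬ (ofLex (nxt u)).2 = (ofLex u).2 := by
          intro hxy
          have : u ∈ L.filter (fun z => (ofLex z).2 = (ofLex m).2 + q) :=
            Finset.mem_filter.2 ⟨huL, by rw [← hxy, hnu]; exact hz₁A.2⟩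
          have := hz₁min u this
          rw [← hnu] at this
          exact absurd this (not_le_of_gt hnlt)
        refine ⟨u, Finset.mem_filter.2 ⟨huL, hust⟩, ?_⟩
        rw [hnu, hz₁A.2, hmodq]
        rw [hz₀m] at hz₀A
        exact hz₀A.2
      · obtain ⟨u, huL, huM, hnu⟩ := pred z₀ hz₀A.1 hz₀m
        obtain ⟨hnL, hnlt, _⟩ := hnxt u huL huM
        have hust : ¬ (ofLex (nxt u)).2 = (ofLex u).2 := by
          intro hxy
          have : u ∈ L.filter (fun z => (ofLex z).2 % q = s.2 % q) :=
            Finset.mem_filter.2 ⟨huL, by rw [← hxy, hnu]; exact hz₀A.2⟩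
          have := hz₀min u this
          rw [← hnu] at this
          exact absurd this (not_le_of_gt hnlt)
        refine ⟨u, Finset.mem_filter.2 ⟨huL, hust⟩, ?_⟩
        rw [hnu]
        exact hz₀A.2
  have hcardL : L.card = S.card := Finset.card_image_of_injective _ toLex.injective
  rw [← bij1, ← bij2, hsplit, hcardL]

end AnnCount


namespace AnnAux

open AnnArc

/-- The arc represented by a lift point in the strip `0 ≤ x < p`. -/
def arcOf (p q : ℕ) (z : ℤ × ℤ) : AnnArc p q :=
  AnnArc.bridging (z.1 : ZMod p) (z.2 : ZMod q) (z.2 / q)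

variable {p q : ℕ} [NeZero p] [NeZero q]

lemma cast_val_int_p (i : ZMod p) : (((i.val : ℤ)) : ZMod p) = i := by
  push_cast
  exact ZMod.natCast_rightInverse i

lemma val_fst (y : ℤ) (h0 : 0 ≤ y) (h1 : y < (p : ℤ)) :
    (ZMod.val ((y : ℤ) : ZMod p) : ℤ) = y := by
  rw [ZMod.val_intCast, Int.emod_eq_of_lt h0 h1]

lemma val_snd (y : ℤ) : (ZMod.val ((y : ℤ) : ZMod q) : ℤ) + y / (q : ℤ) * (q : ℤ) = y := by
  rw [ZMod.val_intCast]
  exact Int.emod_add_ediv_mul y q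

lemma lift_arcOf (i : ZMod p) (j : ZMod q) (w : ℤ) :
    arcOf p q (((i.val : ℤ)), ((j.val : ℤ) + w * q)) = AnnArc.bridging i j w := by
  have hq : 0 < (q : ℤ) := by exact_mod_cast (NeZero.pos q)
  unfold arcOf
  dsimp only
  have e1 : (((i.val : ℤ)) : ZMod p) = i := cast_val_int_p i
  have e2 : ((((j.val : ℤ) + w * (q : ℤ) : ℤ)) : ZMod q) = j := by
    push_cast
    simp [ZMod.natCast_self, ZMod.natCast_val, ZMod.cast_id]
  have e3 : ((j.val : ℤ) + w * q) / (q : ℤ) = w := by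
    rw [Int.add_mul_ediv_right _ _ (ne_of_gt hq),
      Int.ediv_eq_zero_of_lt (by positivity) (by exact_mod_cast ZMod.val_lt j), zero_add]
  rw [e1, e2, e3]

lemma arcOf_inj {z z' : ℤ × ℤ} (h0 : 0 ≤ z.1) (h1 : z.1 < (p : ℤ))
    (h0' : 0 ≤ z'.1) (h1' : z'.1 < (p : ℤ))
    (he : arcOf p q z = arcOf p q z') : z = z' := by
  have hq : 0 < (q : ℤ) := by exact_mod_cast (NeZero.pos q)
  unfold arcOf at he
  rw [AnnArc.bridging.injEq] at he
  obtain ⟨e1, e2, e3⟩ := he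
  have d1 : z.1 = z'.1 := by
    have h := (ZMod.intCast_eq_intCast_iff' _ _ _).1 e1
    rwa [Int.emod_eq_of_lt h0 h1, Int.emod_eq_of_lt h0' h1'] at h
  have d2 : z.2 = z'.2 := by
    have h := (ZMod.intCast_eq_intCast_iff' _ _ _).1 e2
    have k1 := Int.emod_add_ediv_mul z.2 (q : ℤ)
    have k2 := Int.emod_add_ediv_mul z'.2 (q : ℤ)
    have : z.2 / (q : ℤ) * (q : ℤ) = z'.2 / (q : ℤ) * (q : ℤ) := by rw [e3]
    linarith
  exact Prod.ext d1 d2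

variable (T : Set (AnnArc p q))

/-- The set of strip lifts of the bridging arcs of `T`. -/
def lifts : Set (ℤ × ℤ) := {z | 0 ≤ z.1 ∧ z.1 < (p : ℤ) ∧ arcOf p q z ∈ T}

variable {T}

lemma lift_mem {i : ZMod p} {j : ZMod q} {w : ℤ} (h : AnnArc.bridging i j w ∈ T) :
    (((i.val : ℤ)), ((j.val : ℤ) + w * q)) ∈ lifts T := by
  refine ⟨by dsimp only; positivity, by dsimp only; exact_mod_cast ZMod.val_lt i, ?_⟩
  rw [lift_arcOf]
  exact h

lemma compat_lifts (hT : IsTriangulation T) :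
    ∀ z ∈ lifts T, ∀ z' ∈ lifts T, ∀ k : ℤ,
      0 ≤ (z.1 - (z'.1 + k * p)) * (z.2 - (z'.2 + k * q)) := by
  have hp : 0 < (p : ℤ) := by exact_mod_cast (NeZero.pos p)
  have hq : 0 < (q : ℤ) := by exact_mod_cast (NeZero.pos q)
  intro z hz z' hz' k
  by_cases hzz : z = z'
  · subst hzz
    have : (z.1 - (z.1 + k * p)) * (z.2 - (z.2 + k * q)) = k * k * (p * q) := by ring
    rw [this]
    exact mul_nonneg (mul_self_nonneg k) (by positivity)
  · have hne : arcOf p q z ≠ arcOf p q z' := fun h =>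
      hzz (arcOf_inj hz.1 hz.2.1 hz'.1 hz'.2.1 h)
    have hc : AnnArc.bridgeCompat p q ((z.1 : ZMod p)) ((z.2 : ZMod q)) (z.2 / q)
        ((z'.1 : ZMod p)) ((z'.2 : ZMod q)) (z'.2 / q) :=
      hT.compat _ hz.2.2 _ hz'.2.2 hne
    have h := hc k
    rw [val_fst z.1 hz.1 hz.2.1, val_fst z'.1 hz'.1 hz'.2.1] at h
    have e2 := val_snd (q := q) z.2
    have e2' := val_snd (q := q) z'.2
    have efac : (ZMod.val ((z.2 : ZMod q)) : ℤ) + z.2 / (q : ℤ) * (q : ℤ) -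
        ((ZMod.val ((z'.2 : ZMod q)) : ℤ) + (z'.2 / (q : ℤ) + k) * (q : ℤ))
        = z.2 - (z'.2 + k * (q : ℤ)) := by
      linear_combination e2 - e2'
    rwa [efac] at h

lemma bridgeCompat_of_lift (x y : ℤ) (h0 : 0 ≤ x) (h1 : x < (p : ℤ))
    (i'' : ZMod p) (j'' : ZMod q) (w'' : ℤ)
    (h : ∀ k : ℤ, 0 ≤ (x - ((i''.val : ℤ) + k * p)) *
      (y - (((j''.val : ℤ) + w'' * q) + k * q))) :
    AnnArc.bridgeCompat p q ((x : ZMod p)) ((y : ZMod q)) (y / q) i'' j'' w'' := by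
  intro k
  have hk := h k
  rw [val_fst x h0 h1, val_snd y]
  have e : ((j''.val : ℤ) + (w'' + k) * (q : ℤ)) = (((j''.val : ℤ) + w'' * q) + k * q) := by
    ring
  rw [e]
  exact hk

lemma insert_h4 (hT : IsTriangulation T) :
    ∀ z ∈ lifts T, ∀ z' ∈ lifts T, z.1 < z'.1 → z.2 < z'.2 →
      (∀ w ∈ lifts T, ¬(z.1 < w.1 ∧ w.1 ≤ z'.1 ∧ z.2 ≤ w.2 ∧ w.2 < z'.2)) →
      (z.1, z'.2) ∈ lifts T := by
  have hp : 0 < (p : ℤ) := by exact_mod_cast (NeZero.pos p)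
  have hq : 0 < (q : ℤ) := by exact_mod_cast (NeZero.pos q)
  intro z hz z' hz' hxx hyy hnw
  have hcz := compat_lifts hT
  refine ⟨hz.1, hz.2.1, ?_⟩
  refine hT.maximal _ trivial (fun h => h) ?_
  intro b hb hneb
  cases b with
  | lowerPeri a b' =>
      exact hT.compat _ hz.2.2 _ hb (fun h => by unfold arcOf at h; cases h)
  | upperPeri a b' =>
      exact hT.compat _ hz'.2.2 _ hb (fun h => by unfold arcOf at h; cases h)
  | lowerPrufer m => exact (hT.ordinary _ hb trivial).elim
  | lowerAdic m => exact (hT.ordinary _ hb trivial).elim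
  | upperPrufer m => exact (hT.ordinary _ hb trivial).elim
  | upperAdic m => exact (hT.ordinary _ hb trivial).elim
  | bridging i'' j'' w'' =>
      apply bridgeCompat_of_lift z.1 z'.2 hz.1 hz.2.1
      intro k
      have hzz'' : (((i''.val : ℤ)), ((j''.val : ℤ) + w'' * q)) ∈ lifts T := lift_mem hb
      have hx0 : (0 : ℤ) ≤ (i''.val : ℤ) := by positivity
      have hx1 : ((i''.val : ℤ)) < (p : ℤ) := by exact_mod_cast ZMod.val_lt i''
      have h1 := hcz z hz _ hzz'' k
      dsimp only at h1
      rcases lt_trichotomy (z.1 - ((i''.val : ℤ) + k * p)) 0 with hA | hA | hA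
      · -- A < 0 : show second factor ≤ 0
        have hB : z'.2 - (((j''.val : ℤ) + w'' * q) + k * q) ≤ 0 := by
          by_contra hB
          push_neg at hB
          have h2 := hcz z' hz' _ hzz'' k
          dsimp only at h2
          have c1 : z.2 - (((j''.val : ℤ) + w'' * q) + k * q) ≤ 0 := by nlinarith
          have c2 : 0 ≤ z'.1 - ((i''.val : ℤ) + k * p) := by nlinarith
          have hk0 : k = 0 := by
            rcases lt_trichotomy k 0 with hk | hk | hk
            · have hk1 : k ≤ -1 := by omega
              have : k * (p : ℤ) ≤ -1 * p := mul_le_mul_of_nonneg_right hk1 (le_of_lt hp)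
              linarith [hz.1, hz.2.1, hz'.1, hz'.2.1]
            · exact hk
            · have hk1 : 1 ≤ k := by omega
              have : 1 * (p : ℤ) ≤ k * p := mul_le_mul_of_nonneg_right hk1 (le_of_lt hp)
              linarith [hz.1, hz.2.1, hz'.1, hz'.2.1]
          subst hk0
          exact hnw _ hzz'' ⟨by dsimp only; linarith, by dsimp only; linarith,
            by dsimp only; linarith, by dsimp only; linarith⟩
        nlinarith [mul_nonneg (neg_nonneg.2 (le_of_lt hA)) (neg_nonneg.2 hB)]
      · rw [hA, zero_mul]
      · have c1 : 0 ≤ z.2 - (((j''.val : ℤ) + w'' * q) + k * q) := by nlinarith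
        exact mul_nonneg (le_of_lt hA) (by linarith)

lemma insert_h5 (hT : IsTriangulation T) :
    ∀ z ∈ lifts T, ∀ z' ∈ lifts T, z.2 < z'.2 + q →
      (∀ w ∈ lifts T, ¬(z.1 < w.1 ∧ z.2 ≤ w.2 ∧ w.2 < z'.2 + q)) →
      (∀ w ∈ lifts T, ¬(w.1 ≤ z'.1 ∧ z.2 ≤ w.2 + q ∧ w.2 < z'.2)) →
      (z.1, z'.2 + q) ∈ lifts T := by
  have hp : 0 < (p : ℤ) := by exact_mod_cast (NeZero.pos p)
  have hq : 0 < (q : ℤ) := by exact_mod_cast (NeZero.pos q)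
  intro z hz z' hz' hyy hnw1 hnw2
  have hcz := compat_lifts hT
  refine ⟨hz.1, hz.2.1, ?_⟩
  refine hT.maximal _ trivial (fun h => h) ?_
  intro b hb hneb
  cases b with
  | lowerPeri a b' =>
      exact hT.compat _ hz.2.2 _ hb (fun h => by unfold arcOf at h; cases h)
  | upperPeri a b' =>
      have h := hT.compat _ hz'.2.2 _ hb (fun h => by unfold arcOf at h; cases h)
      have ecast : (((z'.2 + (q : ℤ)) : ℤ) : ZMod q) = ((z'.2 : ℤ) : ZMod q) := by
        push_cast
        simp [ZMod.natCast_self]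
      show ¬ AnnArc.Between a b' (((z'.2 + (q : ℤ)) : ℤ) : ZMod q)
      rw [ecast]
      exact h
  | lowerPrufer m => exact (hT.ordinary _ hb trivial).elim
  | lowerAdic m => exact (hT.ordinary _ hb trivial).elim
  | upperPrufer m => exact (hT.ordinary _ hb trivial).elim
  | upperAdic m => exact (hT.ordinary _ hb trivial).elim
  | bridging i'' j'' w'' =>
      apply bridgeCompat_of_lift z.1 (z'.2 + q) hz.1 hz.2.1
      intro k
      have hzz'' : (((i''.val : ℤ)), ((j''.val : ℤ) + w'' * q)) ∈ lifts T := lift_mem hb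
      have hx0 : (0 : ℤ) ≤ (i''.val : ℤ) := by positivity
      have hx1 : ((i''.val : ℤ)) < (p : ℤ) := by exact_mod_cast ZMod.val_lt i''
      have h1 := hcz z hz _ hzz'' k
      dsimp only at h1
      rcases lt_trichotomy (z.1 - ((i''.val : ℤ) + k * p)) 0 with hA | hA | hA
      · -- A < 0
        have hB : z'.2 + q - (((j''.val : ℤ) + w'' * q) + k * q) ≤ 0 := by
          by_contra hB
          push_neg at hB
          have c1 : z.2 ≤ ((j''.val : ℤ) + w'' * q) + k * q := by nlinarith
          have h2 := hcz z' hz' _ hzz'' (k - 1)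
          dsimp only at h2
          have c2 : 0 ≤ z'.1 - ((i''.val : ℤ) + (k - 1) * p) := by nlinarith
          have hk01 : k = 0 ∨ k = 1 := by
            rcases lt_trichotomy k 0 with hk | hk | hk
            · exfalso
              have hk1 : k ≤ -1 := by omega
              have : k * (p : ℤ) ≤ -1 * p := mul_le_mul_of_nonneg_right hk1 (le_of_lt hp)
              linarith [hz.1, hz.2.1, hz'.1, hz'.2.1]
            · exact Or.inl hk
            · rcases lt_or_ge k 2 with hk2 | hk2
              · exact Or.inr (by omega)
              · exfalso
                have : 2 * (p : ℤ) ≤ k * p := mul_le_mul_of_nonneg_right hk2 (le_of_lt hp)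
                linarith [hz.1, hz.2.1, hz'.1, hz'.2.1]
          rcases hk01 with rfl | rfl
          · exact hnw1 _ hzz'' ⟨by dsimp only; linarith, by dsimp only; linarith,
              by dsimp only; linarith⟩
          · exact hnw2 _ hzz'' ⟨by dsimp only; linarith, by dsimp only; linarith,
              by dsimp only; linarith⟩
        nlinarith [mul_nonneg (neg_nonneg.2 (le_of_lt hA)) (neg_nonneg.2 hB)]
      · rw [hA, zero_mul]
      · have c1 : 0 ≤ z.2 - (((j''.val : ℤ) + w'' * q) + k * q) := by nlinarith
        exact mul_nonneg (le_of_lt hA) (by linarith)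

lemma lifts_finite (hT : IsTriangulation T) : (lifts T).Finite := by
  have hp : 0 < (p : ℤ) := by exact_mod_cast (NeZero.pos p)
  have hq : 0 < (q : ℤ) := by exact_mod_cast (NeZero.pos q)
  rcases Set.eq_empty_or_nonempty (lifts T) with h | ⟨z₀, hz₀⟩
  · rw [h]; exact Set.finite_empty
  · apply Set.Finite.subset (Set.finite_Icc ((0 : ℤ), z₀.2 - q) (((p : ℤ)), z₀.2 + q))
    intro z hz
    have h1 := compat_lifts hT z hz z₀ hz₀ 1
    have h2 := compat_lifts hT z hz z₀ hz₀ (-1)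
    have hu : z.2 ≤ z₀.2 + q := by nlinarith [hz.1, hz.2.1, hz₀.1, hz₀.2.1]
    have hl : z₀.2 - q ≤ z.2 := by nlinarith [hz.1, hz.2.1, hz₀.1, hz₀.2.1]
    rw [Set.mem_Icc]
    exact ⟨⟨hz.1, hl⟩, ⟨le_of_lt hz.2.1, hu⟩⟩

end AnnAux

/-- For a triangulation `T` of the annulus `C_{p,q}` (`p,q ≥ 1`), the number
of Prüfer arcs in `D_z^{+∞} · T` (i.e. the number of Prüfer arcs based at
endpoints of bridging arcs of `T`, over both boundaries) equals the number of
bridging arcs of `T`. -/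
theorem annulus_prufer_count_eq_bridging_count (p q : ℕ) [NeZero p] [NeZero q]
    (T : Set (AnnArc p q)) (hT : IsTriangulation T) :
    {a : AnnArc p q | ∃ (i : ZMod p) (j : ZMod q) (w : ℤ),
        AnnArc.bridging i j w ∈ T ∧
        (a = AnnArc.lowerPrufer i ∨ a = AnnArc.upperPrufer j)}.ncard
      = {a ∈ T | a.IsBridging}.ncard := by
  classical
  have hp : 0 < (p : ℤ) := by exact_mod_cast (NeZero.pos p)
  have hq : 0 < (q : ℤ) := by exact_mod_cast (NeZero.pos q)
  have hfin : (AnnAux.lifts T).Finite := AnnAux.lifts_finite hT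
  set S : Finset (ℤ × ℤ) := hfin.toFinset with hS
  have hmemS : ∀ z : ℤ × ℤ, z ∈ S ↔ z ∈ AnnAux.lifts T := fun z => hfin.mem_toFinset
  have habs := AnnCount.abstract_count hp hq S
    (fun z hz => ⟨((hmemS z).1 hz).1, ((hmemS z).1 hz).2.1⟩)
    (fun z hz w hw hlt => by
      have h := AnnAux.compat_lifts hT z ((hmemS z).1 hz) w ((hmemS w).1 hw) 0
      nlinarith)
    (fun z hz w hw => by
      have h := AnnAux.compat_lifts hT z ((hmemS z).1 hz) w ((hmemS w).1 hw) 1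
      have hz' := (hmemS z).1 hz
      have hw' := (hmemS w).1 hw
      nlinarith [hz'.1, hz'.2.1, hw'.1, hw'.2.1])
    (fun z hz z' hz' hx hy hnw => (hmemS _).2
      (AnnAux.insert_h4 hT z ((hmemS z).1 hz) z' ((hmemS z').1 hz') hx hy
        (fun w hw => hnw w ((hmemS w).2 hw))))
    (fun z hz z' hz' hy hn1 hn2 => (hmemS _).2
      (AnnAux.insert_h5 hT z ((hmemS z).1 hz) z' ((hmemS z').1 hz') hy
        (fun w hw => hn1 w ((hmemS w).2 hw)) (fun w hw => hn2 w ((hmemS w).2 hw))))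
  -- the bridging side
  have hinj : Set.InjOn (AnnAux.arcOf p q) (AnnAux.lifts T) := fun z hz z' hz' he =>
    AnnAux.arcOf_inj hz.1 hz.2.1 hz'.1 hz'.2.1 he
  have himg : {a ∈ T | a.IsBridging} = AnnAux.arcOf p q '' (AnnAux.lifts T) := by
    ext a
    constructor
    · rintro ⟨haT, hbr⟩
      cases a with
      | bridging i j w =>
          exact ⟨(((i.val : ℤ)), ((j.val : ℤ) + w * q)), AnnAux.lift_mem haT,
            AnnAux.lift_arcOf i j w⟩
      | lowerPeri i j => exact hbr.elim
      | upperPeri i j => exact hbr.elim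
      | lowerPrufer m => exact hbr.elim
      | lowerAdic m => exact hbr.elim
      | upperPrufer m => exact hbr.elim
      | upperAdic m => exact hbr.elim
    · rintro ⟨z, hz, rfl⟩
      exact ⟨hz.2.2, trivial⟩
  have hRHS : {a ∈ T | a.IsBridging}.ncard = S.card := by
    rw [himg, Set.ncard_image_of_injOn hinj, ← hfin.coe_toFinset, Set.ncard_coe_finset]
  -- the Prüfer side
  set X : Set (ZMod p) := {i | ∃ j w, AnnArc.bridging i j w ∈ T} with hX
  set Y : Set (ZMod q) := {j | ∃ i w, AnnArc.bridging i j w ∈ T} with hY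
  have hPeq : {a : AnnArc p q | ∃ (i : ZMod p) (j : ZMod q) (w : ℤ),
      AnnArc.bridging i j w ∈ T ∧
      (a = AnnArc.lowerPrufer i ∨ a = AnnArc.upperPrufer j)}
      = (AnnArc.lowerPrufer '' X) ∪ (AnnArc.upperPrufer '' Y) := by
    ext a
    simp only [Set.mem_setOf_eq, Set.mem_union, Set.mem_image, hX, hY]
    constructor
    · rintro ⟨i, j, w, hm, rfl | rfl⟩
      · exact Or.inl ⟨i, ⟨j, w, hm⟩, rfl⟩
      · exact Or.inr ⟨j, ⟨i, w, hm⟩, rfl⟩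
    · rintro (⟨i, ⟨j, w, hm⟩, rfl⟩ | ⟨j, ⟨i, w, hm⟩, rfl⟩)
      · exact ⟨i, j, w, hm, Or.inl rfl⟩
      · exact ⟨i, j, w, hm, Or.inr rfl⟩
  have hdisj : Disjoint (AnnArc.lowerPrufer '' X) (AnnArc.upperPrufer '' Y : Set (AnnArc p q)) := by
    rw [Set.disjoint_left]
    rintro a ⟨i, _, rfl⟩ ⟨j, _, h⟩
    cases h
  have hcu : (AnnArc.lowerPrufer '' X ∪ AnnArc.upperPrufer '' Y).ncard
      = (AnnArc.lowerPrufer '' X).ncard + (AnnArc.upperPrufer '' Y).ncard :=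
    Set.ncard_union_eq hdisj (Set.toFinite _) (Set.toFinite _)
  have hinjL : Function.Injective (AnnArc.lowerPrufer : ZMod p → AnnArc p q) :=
    fun a b h => by injection h
  have hinjU : Function.Injective (AnnArc.upperPrufer : ZMod q → AnnArc p q) :=
    fun a b h => by injection h
  have hiL : (AnnArc.lowerPrufer '' X).ncard = X.ncard :=
    Set.ncard_image_of_injective _ hinjL
  have hiU : (AnnArc.upperPrufer '' Y).ncard = Y.ncard :=
    Set.ncard_image_of_injective _ hinjU
  have hXeq : X = (fun t : ℤ => ((t : ZMod p))) '' (Prod.fst '' (AnnAux.lifts T)) := by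
    ext i
    constructor
    · rintro ⟨j, w, hm⟩
      exact ⟨(i.val : ℤ), ⟨(((i.val : ℤ)), ((j.val : ℤ) + w * q)), AnnAux.lift_mem hm, rfl⟩,
        AnnAux.cast_val_int_p i⟩
    · rintro ⟨t, ⟨z, hz, rfl⟩, rfl⟩
      exact ⟨((z.2 : ZMod q)), z.2 / q, hz.2.2⟩
  have hXcard : X.ncard = (S.image Prod.fst).card := by
    have hinj2 : Set.InjOn (fun t : ℤ => ((t : ZMod p))) (Prod.fst '' (AnnAux.lifts T)) := by
      rintro a ⟨za, hza, rfl⟩ b ⟨zb, hzb, rfl⟩ he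
      have h := (ZMod.intCast_eq_intCast_iff' _ _ _).1 he
      rwa [Int.emod_eq_of_lt hza.1 hza.2.1, Int.emod_eq_of_lt hzb.1 hzb.2.1] at h
    rw [hXeq, Set.ncard_image_of_injOn hinj2, ← hfin.coe_toFinset, ← Finset.coe_image,
      Set.ncard_coe_finset]
  have hYeq : Y = (fun t : ℤ => ((t : ZMod q))) ''
      ((fun z : ℤ × ℤ => z.2 % (q : ℤ)) '' (AnnAux.lifts T)) := by
    ext j
    constructor
    · rintro ⟨i, w, hm⟩
      refine ⟨((j.val : ℤ) + w * q) % (q : ℤ),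
        ⟨(((i.val : ℤ)), ((j.val : ℤ) + w * q)), AnnAux.lift_mem hm, rfl⟩, ?_⟩
      have e : ((j.val : ℤ) + w * (q : ℤ)) % (q : ℤ) = (j.val : ℤ) := by
        rw [show (j.val : ℤ) + w * q = (j.val : ℤ) + q * w by ring, Int.add_mul_emod_self_left,
          Int.emod_eq_of_lt (by positivity) (by exact_mod_cast ZMod.val_lt j)]
      rw [e]
      exact AnnAux.cast_val_int_p j
    · rintro ⟨t, ⟨z, hz, rfl⟩, rfl⟩
      refine ⟨((z.1 : ZMod p)), z.2 / q, ?_⟩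
      have e : (((z.2 % (q : ℤ)) : ℤ) : ZMod q) = ((z.2 : ℤ) : ZMod q) := by
        rw [ZMod.intCast_eq_intCast_iff']
        exact Int.emod_emod_of_dvd z.2 dvd_rfl
      show AnnArc.bridging ((z.1 : ZMod p)) (((z.2 % (q : ℤ)) : ℤ) : ZMod q) (z.2 / q) ∈ T
      rw [e]
      exact hz.2.2
  have hYcard : Y.ncard = (S.image fun z => z.2 % (q : ℤ)).card := by
    have hinj2 : Set.InjOn (fun t : ℤ => ((t : ZMod q)))
        ((fun z : ℤ × ℤ => z.2 % (q : ℤ)) '' (AnnAux.lifts T)) := by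
      rintro a ⟨za, hza, rfl⟩ b ⟨zb, hzb, rfl⟩ he
      have h := (ZMod.intCast_eq_intCast_iff' _ _ _).1 he
      rwa [Int.emod_eq_of_lt (Int.emod_nonneg _ (ne_of_gt hq)) (Int.emod_lt_of_pos _ hq),
        Int.emod_eq_of_lt (Int.emod_nonneg _ (ne_of_gt hq)) (Int.emod_lt_of_pos _ hq)] at h
    rw [hYeq, Set.ncard_image_of_injOn hinj2, ← hfin.coe_toFinset, ← Finset.coe_image,
      Set.ncard_coe_finset]
  rw [hPeq, hcu, hiL, hiU, hXcard, hYcard, hRHS]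
  exact habs
end

section
/- In the annulus C_{1,1} with one marked point on each boundary, the set of limits of converging sequences of triangulations equals T(C_{1,1}) together with exactly two strictly asymptotic triangulations ({π_o, π_ι} and {α_o, α_ι}), whereas the set of all asymptotic triangulations contains four strictly asymptotic triangulations; hence not every strictly asymptotic triangulation is a limit of triangulations. -/
/-- Asymptotic arcs of the annulus `C_{1,1}`: bridging arcs `γ n` (indexed by
winding number), and strictly asymptotic arcs `π_o, α_o, π_ι, α_ι`. -/
inductive Arc11 : Type
  | bridge (n : ℤ) : Arc11
  | pruferO : Arc11
  | adicO : Arc11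
  | pruferI : Arc11
  | adicI : Arc11
  deriving DecidableEq

namespace Arc11

/-- Compatibility: `γ n` and `γ m` compatible iff `|n - m| ≤ 1`; strictly
asymptotic arcs incompatible with every bridging arc; `π_o` incompatible with
`α_o` and `π_ι` incompatible with `α_ι`; all other strictly asymptotic pairs
compatible. -/
def Compatible : Arc11 → Arc11 → Prop
  | bridge n, bridge m => (n - m).natAbs ≤ 1
  | bridge _, _ => False
  | _, bridge _ => False
  | pruferO, adicO => False
  | adicO, pruferO => False
  | pruferI, adicI => False
  | adicI, pruferI => False
  | _, _ => True

/-- The Dehn twist, shifting winding numbers of bridging arcs. -/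
def shift (k : ℤ) : Arc11 → Arc11
  | bridge n => bridge (n + k)
  | a => a

end Arc11

/-- Triangulations of `C_{1,1}`: pairs `{γ n, γ (n+1)}`. -/
def IsTri11 (T : Set Arc11) : Prop :=
  ∃ n : ℤ, T = {Arc11.bridge n, Arc11.bridge (n + 1)}

/-- Asymptotic triangulations of `C_{1,1}`: maximal pairwise-compatible sets of
distinct asymptotic arcs. -/
def IsAsympTri11 (T : Set Arc11) : Prop :=
  (∀ a ∈ T, ∀ b ∈ T, a ≠ b → a.Compatible b) ∧
  (∀ a : Arc11, (∀ b ∈ T, a ≠ b → a.Compatible b) → a ∈ T)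

/-- `T` is the limit of a converging sequence of triangulations of `C_{1,1}`:
there is a sequence of triangulations, eventually of the form
`D_z^{d k} · S N` for a monotone `d`, whose limit (blueprint twisted by the
limit of `d`; the Prüfer, resp. adic, pair if `d → ±∞`) is `T`. -/
def IsLimit11 (T : Set Arc11) : Prop :=
  ∃ (S : ℕ → Set Arc11) (N : ℕ) (d : ℕ → ℤ),
    (∀ n, IsTri11 (S n)) ∧ (Monotone d ∨ Antitone d) ∧
    (∀ k : ℕ, S (N + k) = Arc11.shift (d k) '' S N) ∧
    ((∃ c : ℤ, (∀ᶠ k in Filter.atTop, d k = c) ∧ T = Arc11.shift c '' S N) ∨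
     (Filter.Tendsto d Filter.atTop Filter.atTop ∧ T = {Arc11.pruferO, Arc11.pruferI}) ∨
     (Filter.Tendsto d Filter.atTop Filter.atBot ∧ T = {Arc11.adicO, Arc11.adicI}))

section Aux
open Arc11

lemma pair_eq {a b a' b' : ℤ} (h1 : a = a') (h2 : b = b') :
    ({Arc11.bridge a, Arc11.bridge b} : Set Arc11) = {Arc11.bridge a', Arc11.bridge b'} := by
  rw [h1, h2]

lemma shift_pair (c n : ℤ) :
    Arc11.shift c '' {Arc11.bridge n, Arc11.bridge (n + 1)} =
      {Arc11.bridge (n + c), Arc11.bridge (n + 1 + c)} := by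
  rw [Set.image_pair]; rfl

lemma two_adj {T : Set Arc11}
    (hc : ∀ a ∈ T, ∀ b ∈ T, a ≠ b → a.Compatible b)
    {n : ℤ} (h0 : Arc11.bridge n ∈ T) (h1 : Arc11.bridge (n + 1) ∈ T) :
    T = {Arc11.bridge n, Arc11.bridge (n + 1)} := by
  ext a
  simp only [Set.mem_insert_iff, Set.mem_singleton_iff]
  constructor
  · intro ha
    cases a with
    | bridge m =>
      by_cases e0 : m = n
      · left; rw [e0]
      by_cases e1 : m = n + 1
      · right; rw [e1]
      have c0 : (m - n).natAbs ≤ 1 := hc _ ha _ h0 (by simp [e0])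
      have c1 : (m - (n + 1)).natAbs ≤ 1 := hc _ ha _ h1 (by simp [e1])
      omega
    | pruferO => exact absurd (hc _ ha _ h0 (by simp)) (fun h => h)
    | adicO => exact absurd (hc _ ha _ h0 (by simp)) (fun h => h)
    | pruferI => exact absurd (hc _ ha _ h0 (by simp)) (fun h => h)
    | adicI => exact absurd (hc _ ha _ h0 (by simp)) (fun h => h)
  · rintro (rfl | rfl) <;> assumption

lemma asymp_char (T : Set Arc11) :
    IsAsympTri11 T ↔ (IsTri11 T ∨ T = {Arc11.pruferO, Arc11.pruferI}
      ∨ T = {Arc11.adicO, Arc11.adicI} ∨ T = {Arc11.pruferO, Arc11.adicI}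
      ∨ T = {Arc11.adicO, Arc11.pruferI}) := by
  constructor
  · rintro ⟨hc, hm⟩
    by_cases hb : ∃ n, Arc11.bridge n ∈ T
    · obtain ⟨n, hn⟩ := hb
      left
      by_cases h1 : Arc11.bridge (n + 1) ∈ T
      · exact ⟨n, two_adj hc hn h1⟩
      · have hmem : Arc11.bridge (n - 1) ∈ T := by
          by_contra hne
          apply h1
          apply hm
          intro b hb' hne'
          cases b with
          | bridge m =>
            show ((n + 1) - m).natAbs ≤ 1
            by_cases hmn : m = n
            · omega
            · have hcm : (m - n).natAbs ≤ 1 := hc _ hb' _ hn (by simp [hmn])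
              have hm1 : m ≠ n - 1 := fun h => hne (h ▸ hb')
              have hm2 : m ≠ n + 1 := by
                intro h; exact hne' (by rw [h])
              omega
          | pruferO => exact absurd (hc _ hb' _ hn (by simp)) (fun h => h)
          | adicO => exact absurd (hc _ hb' _ hn (by simp)) (fun h => h)
          | pruferI => exact absurd (hc _ hb' _ hn (by simp)) (fun h => h)
          | adicI => exact absurd (hc _ hb' _ hn (by simp)) (fun h => h)
        have hn' : Arc11.bridge ((n - 1) + 1) ∈ T := by
          rw [show n - 1 + 1 = n by omega]; exact hn
        exact ⟨n - 1, two_adj hc hmem hn'⟩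
    · push_neg at hb
      by_cases hpO : Arc11.pruferO ∈ T
      · by_cases hpI : Arc11.pruferI ∈ T
        · refine Or.inr (Or.inl ?_)
          ext a
          simp only [Set.mem_insert_iff, Set.mem_singleton_iff]
          constructor
          · intro ha
            cases a with
            | bridge m => exact absurd ha (hb m)
            | pruferO => exact Or.inl rfl
            | adicO => exact absurd (hc _ ha _ hpO (by simp)) (fun h => h)
            | pruferI => exact Or.inr rfl
            | adicI => exact absurd (hc _ ha _ hpI (by simp)) (fun h => h)
          · rintro (rfl | rfl) <;> assumption
        · have haI : Arc11.adicI ∈ T := by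
            apply hm
            intro b hb' hne'
            cases b with
            | bridge m => exact absurd hb' (hb m)
            | pruferO => trivial
            | adicO => trivial
            | pruferI => exact absurd hb' hpI
            | adicI => trivial
          refine Or.inr (Or.inr (Or.inr (Or.inl ?_)))
          ext a
          simp only [Set.mem_insert_iff, Set.mem_singleton_iff]
          constructor
          · intro ha
            cases a with
            | bridge m => exact absurd ha (hb m)
            | pruferO => exact Or.inl rfl
            | adicO => exact absurd (hc _ ha _ hpO (by simp)) (fun h => h)
            | pruferI => exact absurd ha hpI
            | adicI => exact Or.inr rfl
          · rintro (rfl | rfl) <;> assumption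
      · have haO : Arc11.adicO ∈ T := by
          apply hm
          intro b hb' hne'
          cases b with
          | bridge m => exact absurd hb' (hb m)
          | pruferO => exact absurd hb' hpO
          | adicO => trivial
          | pruferI => trivial
          | adicI => trivial
        by_cases hpI : Arc11.pruferI ∈ T
        · refine Or.inr (Or.inr (Or.inr (Or.inr ?_)))
          ext a
          simp only [Set.mem_insert_iff, Set.mem_singleton_iff]
          constructor
          · intro ha
            cases a with
            | bridge m => exact absurd ha (hb m)
            | pruferO => exact absurd ha hpO
            | adicO => exact Or.inl rfl
            | pruferI => exact Or.inr rfl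
            | adicI => exact absurd (hc _ ha _ hpI (by simp)) (fun h => h)
          · rintro (rfl | rfl) <;> assumption
        · have haI : Arc11.adicI ∈ T := by
            apply hm
            intro b hb' hne'
            cases b with
            | bridge m => exact absurd hb' (hb m)
            | pruferO => exact absurd hb' hpO
            | adicO => trivial
            | pruferI => exact absurd hb' hpI
            | adicI => trivial
          refine Or.inr (Or.inr (Or.inl ?_))
          ext a
          simp only [Set.mem_insert_iff, Set.mem_singleton_iff]
          constructor
          · intro ha
            cases a with
            | bridge m => exact absurd ha (hb m)
            | pruferO => exact absurd ha hpO
            | adicO => exact Or.inl rfl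
            | pruferI => exact absurd ha hpI
            | adicI => exact Or.inr rfl
          · rintro (rfl | rfl) <;> assumption
  · rintro (⟨n, rfl⟩ | rfl | rfl | rfl | rfl)
    · constructor
      · intro a ha b hbm hne
        simp only [Set.mem_insert_iff, Set.mem_singleton_iff] at ha hbm
        rcases ha with rfl | rfl <;> rcases hbm with rfl | rfl
        · exact absurd rfl hne
        · show (n - (n + 1)).natAbs ≤ 1; omega
        · show ((n + 1) - n).natAbs ≤ 1; omega
        · exact absurd rfl hne
      · intro a ha
        simp only [Set.mem_insert_iff, Set.mem_singleton_iff]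
        cases a with
        | bridge m =>
          by_cases e0 : m = n
          · exact Or.inl (by rw [e0])
          by_cases e1 : m = n + 1
          · exact Or.inr (by rw [e1])
          have c0 : (m - n).natAbs ≤ 1 := ha (Arc11.bridge n) (by simp) (by simp [e0])
          have c1 : (m - (n + 1)).natAbs ≤ 1 := ha (Arc11.bridge (n+1)) (by simp) (by simp [e1])
          omega
        | pruferO => exact absurd (ha (Arc11.bridge n) (by simp) (by simp)) (fun h => h)
        | adicO => exact absurd (ha (Arc11.bridge n) (by simp) (by simp)) (fun h => h)
        | pruferI => exact absurd (ha (Arc11.bridge n) (by simp) (by simp)) (fun h => h)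
        | adicI => exact absurd (ha (Arc11.bridge n) (by simp) (by simp)) (fun h => h)
    · constructor
      · intro a ha b hbm hne
        simp only [Set.mem_insert_iff, Set.mem_singleton_iff] at ha hbm
        rcases ha with rfl | rfl <;> rcases hbm with rfl | rfl <;>
          first | exact absurd rfl hne | trivial
      · intro a ha
        simp only [Set.mem_insert_iff, Set.mem_singleton_iff]
        cases a with
        | bridge m => exact absurd (ha Arc11.pruferO (by simp) (by simp)) (fun h => h)
        | pruferO => exact Or.inl rfl
        | adicO => exact absurd (ha Arc11.pruferO (by simp) (by simp)) (fun h => h)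
        | pruferI => exact Or.inr rfl
        | adicI => exact absurd (ha Arc11.pruferI (by simp) (by simp)) (fun h => h)
    · constructor
      · intro a ha b hbm hne
        simp only [Set.mem_insert_iff, Set.mem_singleton_iff] at ha hbm
        rcases ha with rfl | rfl <;> rcases hbm with rfl | rfl <;>
          first | exact absurd rfl hne | trivial
      · intro a ha
        simp only [Set.mem_insert_iff, Set.mem_singleton_iff]
        cases a with
        | bridge m => exact absurd (ha Arc11.adicO (by simp) (by simp)) (fun h => h)
        | pruferO => exact absurd (ha Arc11.adicO (by simp) (by simp)) (fun h => h)
        | adicO => exact Or.inl rfl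
        | pruferI => exact absurd (ha Arc11.adicI (by simp) (by simp)) (fun h => h)
        | adicI => exact Or.inr rfl
    · constructor
      · intro a ha b hbm hne
        simp only [Set.mem_insert_iff, Set.mem_singleton_iff] at ha hbm
        rcases ha with rfl | rfl <;> rcases hbm with rfl | rfl <;>
          first | exact absurd rfl hne | trivial
      · intro a ha
        simp only [Set.mem_insert_iff, Set.mem_singleton_iff]
        cases a with
        | bridge m => exact absurd (ha Arc11.pruferO (by simp) (by simp)) (fun h => h)
        | pruferO => exact Or.inl rfl
        | adicO => exact absurd (ha Arc11.pruferO (by simp) (by simp)) (fun h => h)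
        | pruferI => exact absurd (ha Arc11.adicI (by simp) (by simp)) (fun h => h)
        | adicI => exact Or.inr rfl
    · constructor
      · intro a ha b hbm hne
        simp only [Set.mem_insert_iff, Set.mem_singleton_iff] at ha hbm
        rcases ha with rfl | rfl <;> rcases hbm with rfl | rfl <;>
          first | exact absurd rfl hne | trivial
      · intro a ha
        simp only [Set.mem_insert_iff, Set.mem_singleton_iff]
        cases a with
        | bridge m => exact absurd (ha Arc11.adicO (by simp) (by simp)) (fun h => h)
        | pruferO => exact absurd (ha Arc11.adicO (by simp) (by simp)) (fun h => h)
        | adicO => exact Or.inl rfl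
        | pruferI => exact Or.inr rfl
        | adicI => exact absurd (ha Arc11.pruferI (by simp) (by simp)) (fun h => h)

lemma limit_char (T : Set Arc11) :
    IsLimit11 T ↔ (IsTri11 T ∨ T = {Arc11.pruferO, Arc11.pruferI}
      ∨ T = {Arc11.adicO, Arc11.adicI}) := by
  constructor
  · rintro ⟨S, N, d, hS, -, -, hcase⟩
    obtain ⟨n, hSN⟩ := hS N
    rcases hcase with ⟨c, -, hT⟩ | ⟨-, hT⟩ | ⟨-, hT⟩
    · left
      refine ⟨n + c, ?_⟩
      rw [hT, hSN, shift_pair]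
      exact pair_eq rfl (by ring)
    · exact Or.inr (Or.inl hT)
    · exact Or.inr (Or.inr hT)
  · rintro (⟨n, rfl⟩ | rfl | rfl)
    · refine ⟨fun _ => {Arc11.bridge n, Arc11.bridge (n + 1)}, 0, fun _ => 0,
        fun _ => ⟨n, rfl⟩, Or.inl monotone_const, fun k => ?_,
        Or.inl ⟨0, Filter.Eventually.of_forall fun _ => rfl, ?_⟩⟩
      · rw [shift_pair]; exact pair_eq (by ring) (by ring)
      · rw [shift_pair]; exact pair_eq (by ring) (by ring)
    · refine ⟨fun k => {Arc11.bridge (k : ℤ), Arc11.bridge ((k : ℤ) + 1)}, 0, fun k => (k : ℤ),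
        fun k => ⟨(k : ℤ), rfl⟩, Or.inl fun a b h => by show (a:ℤ) ≤ (b:ℤ); exact_mod_cast h, fun k => ?_,
        Or.inr (Or.inl ⟨tendsto_natCast_atTop_atTop, rfl⟩)⟩
      rw [shift_pair]
      exact pair_eq (by push_cast; ring) (by push_cast; ring)
    · refine ⟨fun k => {Arc11.bridge (-(k : ℤ)), Arc11.bridge (-(k : ℤ) + 1)}, 0,
        fun k => -(k : ℤ), fun k => ⟨-(k : ℤ), rfl⟩,
        Or.inr fun a b h => by show -(b:ℤ) ≤ -(a:ℤ); exact neg_le_neg (by exact_mod_cast h), fun k => ?_,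
        Or.inr (Or.inr ⟨Filter.tendsto_neg_atTop_atBot.comp tendsto_natCast_atTop_atTop, rfl⟩)⟩
      rw [shift_pair]
      exact pair_eq (by push_cast; ring) (by push_cast; ring)

end Aux

/-- In `C_{1,1}` the set of limits of converging sequences of triangulations is
`T(C_{1,1})` together with exactly the two strictly asymptotic triangulations
`{π_o, π_ι}` and `{α_o, α_ι}`, whereas there are four strictly asymptotic
triangulations; hence some strictly asymptotic triangulation is not a limit of
triangulations. -/
theorem c11_limits :
    ({T : Set Arc11 | IsLimit11 T}
      = {T | IsTri11 T} ∪
        {{Arc11.pruferO, Arc11.pruferI}, {Arc11.adicO, Arc11.adicI}}) ∧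
    ({T : Set Arc11 | IsAsympTri11 T}
      = {T | IsTri11 T} ∪
        {{Arc11.pruferO, Arc11.pruferI}, {Arc11.adicO, Arc11.adicI},
         {Arc11.pruferO, Arc11.adicI}, {Arc11.adicO, Arc11.pruferI}}) ∧
    ∃ T : Set Arc11, IsAsympTri11 T ∧ ¬ IsTri11 T ∧ ¬ IsLimit11 T := by
  refine ⟨?_, ?_, ?_⟩
  · ext T
    simp only [Set.mem_setOf_eq, Set.mem_union, Set.mem_insert_iff, Set.mem_singleton_iff,
      limit_char]
  · ext T
    simp only [Set.mem_setOf_eq, Set.mem_union, Set.mem_insert_iff, Set.mem_singleton_iff,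
      asymp_char]
  · refine ⟨{Arc11.pruferO, Arc11.adicI}, ?_, ?_, ?_⟩
    · exact (asymp_char _).mpr (Or.inr (Or.inr (Or.inr (Or.inl rfl))))
    · rintro ⟨n, h⟩
      have : Arc11.bridge n ∈ ({Arc11.pruferO, Arc11.adicI} : Set Arc11) := by
        rw [h]; simp
      simp at this
    · intro hL
      rcases (limit_char _).mp hL with ⟨n, h⟩ | h | h
      · have : Arc11.bridge n ∈ ({Arc11.pruferO, Arc11.adicI} : Set Arc11) := by
          rw [h]; simp
        simp at this
      · have : Arc11.adicI ∈ ({Arc11.pruferO, Arc11.pruferI} : Set Arc11) := by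
          rw [← h]; simp
        simp at this
      · have : Arc11.pruferO ∈ ({Arc11.adicO, Arc11.adicI} : Set Arc11) := by
          rw [← h]; simp
        simp at this
end
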